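/- Let u be a linear functional on 𝒫 which is regular and satisfies D_{q,ω}(φu) = ψu, where φ has degree at most 2 and ψ has degree at most 1. If at least one of the polynomials φ and ψ is not the zero polynomial, then neither φ nor ψ is the zero polynomial and, moreover, deg ψ = 1. -/

import Mathlib

open Polynomial

noncomputable section

namespace HahnOPSPaper

/-- The algebraic dual of the space of complex polynomials. -/
abbrev PDual : Type := Module.Dual ℂ (Polynomial ℂ)

/-- Left multiplication of a functional by a polynomial: `⟨φu, f⟩ = ⟨u, φf⟩`. -/
def pMul (φ : Polynomial ℂ) (u : PDual) : PDual := u ∘ₗ LinearMap.mulLeft ℂ φ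

/-- Distributional derivative: `⟨Du, f⟩ = -⟨u, f'⟩`. -/
def dDeriv (u : PDual) : PDual :=
  -(u ∘ₗ (Polynomial.derivative : Polynomial ℂ →ₗ[ℂ] Polynomial ℂ))

/-- The q-bracket `[n]_q = 1 + q + ⋯ + q^(n-1)`. -/
def qBracket (q : ℂ) (n : ℕ) : ℂ := ∑ i ∈ Finset.range n, q ^ i

/-- q-factorial `[n]_q!`. -/
def qFact (q : ℂ) (n : ℕ) : ℂ := ∏ i ∈ Finset.range n, qBracket q (i + 1)

/-- `D` is Hahn's operator `D_{q,ω}`, i.e. the (unique, for `(q,ω) ≠ (1,0)`) linear operator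
with `((q-1)x + ω)·(Df)(x) = f(qx+ω) - f(x)`. -/
def IsHahn (q ω : ℂ) (D : Polynomial ℂ →ₗ[ℂ] Polynomial ℂ) : Prop :=
  ∀ f : Polynomial ℂ, (C (q - 1) * X + C ω) * D f = f.comp (C q * X + C ω) - f

/-- The operator `(L_{q,ω} f)(x) = f(qx + ω)`. -/
def Lop (q ω : ℂ) : Polynomial ℂ →ₗ[ℂ] Polynomial ℂ :=
  (aeval (C q * X + C ω)).toLinearMap

/-- The distributional Hahn operator `D_{q,ω}` on the dual, built from the ordinary operator
`D*_{q,ω} = D_{1/q,-ω/q}`: `⟨D_{q,ω}u, f⟩ = -q⁻¹·⟨u, D*_{q,ω}f⟩`. -/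
def hahnDual (q : ℂ) (Dstar : Polynomial ℂ →ₗ[ℂ] Polynomial ℂ) (u : PDual) : PDual :=
  (-q⁻¹) • (u ∘ₗ Dstar)

/-- The distributional operator `L_{q,ω}`: `⟨L_{q,ω}u, f⟩ = q⁻¹·⟨u, L_{1/q,-ω/q}f⟩`. -/
def LDual (q ω : ℂ) (u : PDual) : PDual := q⁻¹ • (u ∘ₗ Lop q⁻¹ (-ω / q))

/-- A functional is regular if it admits a monic orthogonal polynomial sequence. -/
def IsRegularFunc (u : PDual) : Prop :=
  ∃ P : ℕ → Polynomial ℂ, (∀ n, (P n).Monic ∧ (P n).natDegree = n) ∧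
    (∀ m n, m ≠ n → u (P m * P n) = 0) ∧ (∀ n, u (P n ^ 2) ≠ 0)

/-- `P` is the monic OPS with respect to `u`. -/
def IsMonicOPS (u : PDual) (P : ℕ → Polynomial ℂ) : Prop :=
  (∀ n, (P n).Monic ∧ (P n).natDegree = n) ∧
    (∀ m n, m ≠ n → u (P m * P n) = 0) ∧ (∀ n, u (P n ^ 2) ≠ 0)

/-- Continuous case: `d_n = d + a·n`. -/
def ddC (a d : ℂ) (n : ℕ) : ℂ := d + a * n

/-- Continuous case: `e_n = e + b·n`. -/
def eeC (b e : ℂ) (n : ℕ) : ℂ := e + b * n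

/-- Continuous case: `β_n = n·e_{n-1}/d_{2n-2} - (n+1)·e_n/d_{2n}`. -/
def betaC (a b d e : ℂ) (n : ℕ) : ℂ :=
  n * eeC b e (n - 1) / ddC a d (2 * n - 2) - (n + 1) * eeC b e n / ddC a d (2 * n)

/-- Continuous case: `γ_{n+1} = -((n+1)·d_{n-1}/(d_{2n-1}·d_{2n+1}))·φ(-e_n/d_{2n})`. -/
def gammaC (a b d e : ℂ) (φ : Polynomial ℂ) (n : ℕ) : ℂ :=
  -((n + 1) * ddC a d (n - 1) / (ddC a d (2 * n - 1) * ddC a d (2 * n + 1))) *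
    φ.eval (-(eeC b e n) / ddC a d (2 * n))

/-- `d_n = d·q^n + a·[n]_q`. -/
def ddQ (q a d : ℂ) (n : ℕ) : ℂ := d * q ^ n + a * qBracket q n

/-- `e_n = e·q^n + (ω·d_n + b)·[n]_q`. -/
def eeQ (q ω a b d e : ℂ) (n : ℕ) : ℂ :=
  e * q ^ n + (ω * ddQ q a d n + b) * qBracket q n

/-- `β_n = ω[n]_q + [n]_q·e_{n-1}/d_{2n-2} - [n+1]_q·e_n/d_{2n}`. -/
def betaQ (q ω a b d e : ℂ) (n : ℕ) : ℂ :=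
  ω * qBracket q n + qBracket q n * eeQ q ω a b d e (n - 1) / ddQ q a d (2 * n - 2)
    - qBracket q (n + 1) * eeQ q ω a b d e n / ddQ q a d (2 * n)

/-- `γ_{n+1} = -(q^n·[n+1]_q·d_{n-1}/(d_{2n-1}·d_{2n+1}))·φ(-e_n/d_{2n})`. -/
def gammaQ (q ω a b d e : ℂ) (φ : Polynomial ℂ) (n : ℕ) : ℂ :=
  -(q ^ n * qBracket q (n + 1) * ddQ q a d (n - 1) /
      (ddQ q a d (2 * n - 1) * ddQ q a d (2 * n + 1))) *
    φ.eval (-(eeQ q ω a b d e n) / ddQ q a d (2 * n))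

/-- `Φ(x;n) = ∏_{j=1}^n φ(q^j x + ω[j]_q)`. -/
def PhiQ (q ω : ℂ) (φ : Polynomial ℂ) (n : ℕ) : Polynomial ℂ :=
  ∏ j ∈ Finset.range n, φ.comp (C (q ^ (j + 1)) * X + C (ω * qBracket q (j + 1)))

/-- `k_n = q^{n(n-3)/2}·∏_{j=0}^{n-1} d_{n+j-1}⁻¹`. -/
def kQ (q a d : ℂ) (n : ℕ) : ℂ :=
  q ^ (((n : ℤ) * ((n : ℤ) - 3)) / 2) * ∏ j ∈ Finset.range n, (ddQ q a d (n + j - 1))⁻¹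



lemma coeff_cancel {f g : Polynomial ℂ} {k : ℕ} (hf : f.natDegree ≤ k + 1)
    (hg : g.natDegree ≤ k + 1) (h : f.coeff (k + 1) = g.coeff (k + 1)) :
    (f - g).natDegree ≤ k := by
  rw [Polynomial.natDegree_le_iff_coeff_eq_zero]
  intro m hm
  rw [Polynomial.coeff_sub]
  rcases eq_or_lt_of_le (Nat.succ_le_of_lt hm) with h1 | h1
  · rw [← h1, h, sub_self]
  · rw [Polynomial.coeff_eq_zero_of_natDegree_lt (lt_of_le_of_lt hf h1),
        Polynomial.coeff_eq_zero_of_natDegree_lt (lt_of_le_of_lt hg h1), sub_self]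

lemma vanish_of_forall_deg (v : PDual) (g : ℕ → Polynomial ℂ)
    (hdeg : ∀ n, (g n).natDegree = n) (hne : ∀ n, g n ≠ 0)
    (hv : ∀ n, v (g n) = 0) (f : Polynomial ℂ) : v f = 0 := by
  suffices h : ∀ k (f : Polynomial ℂ), f.natDegree ≤ k → v f = 0 from
    h f.natDegree f le_rfl
  intro k
  induction k with
  | zero =>
    intro f hf
    have hc : (g 0).coeff 0 ≠ 0 := by
      intro h
      exact hne 0 (by rw [Polynomial.eq_C_of_natDegree_le_zero (hdeg 0).le, h, map_zero])
    have : f = (f.coeff 0 / (g 0).coeff 0) • g 0 := by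
      rw [Polynomial.eq_C_of_natDegree_le_zero hf]
      nth_rewrite 2 [Polynomial.eq_C_of_natDegree_le_zero (hdeg 0).le]
      rw [Polynomial.smul_C]
      congr 1
      rw [Polynomial.coeff_C_zero, smul_eq_mul, div_mul_cancel₀ _ hc]
    rw [this, map_smul, hv 0, smul_zero]
  | succ k ih =>
    intro f hf
    have hlc : (g (k + 1)).leadingCoeff ≠ 0 := Polynomial.leadingCoeff_ne_zero.mpr (hne _)
    set c := f.coeff (k + 1) / (g (k + 1)).leadingCoeff with hcdef
    have h1 : (f - c • g (k + 1)).natDegree ≤ k := by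
      apply coeff_cancel hf ((Polynomial.natDegree_smul_le _ _).trans (hdeg _).le)
      rw [Polynomial.coeff_smul, smul_eq_mul, hcdef]
      have : (g (k + 1)).coeff (k + 1) = (g (k + 1)).leadingCoeff := by
        rw [Polynomial.leadingCoeff, hdeg]
      rw [this]
      field_simp
    have : f = (f - c • g (k + 1)) + c • g (k + 1) := by ring
    rw [this, map_add, ih _ h1, map_smul, hv (k + 1), smul_zero, add_zero]

lemma orth (u : PDual) (P : ℕ → Polynomial ℂ)
    (hP : ∀ n, (P n).Monic ∧ (P n).natDegree = n)
    (ho : ∀ m n, m ≠ n → u (P m * P n) = 0) :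
    ∀ k n (f : Polynomial ℂ), f.natDegree ≤ k → k < n → u (f * P n) = 0 := by
  intro k
  induction k with
  | zero =>
    intro n f hf hn
    have hP0 : P 0 = 1 := ((hP 0).1.natDegree_eq_zero).mp (hP 0).2
    have : f * P n = (f.coeff 0) • (P 0 * P n) := by
      rw [hP0, one_mul, Polynomial.eq_C_of_natDegree_le_zero hf, Polynomial.smul_eq_C_mul,
        Polynomial.coeff_C_zero]
    rw [this, map_smul, ho 0 n hn.ne, smul_zero]
  | succ k ih =>
    intro n f hf hn
    set c := f.coeff (k + 1) with hcdef
    have h1 : (f - C c * P (k + 1)).natDegree ≤ k := by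
      apply coeff_cancel hf
      · exact (Polynomial.natDegree_C_mul_le _ _).trans (hP (k + 1)).2.le
      · rw [Polynomial.coeff_C_mul]
        have : (P (k + 1)).coeff (k + 1) = 1 := by
          have h := (hP (k + 1)).1.coeff_natDegree
          rwa [(hP (k + 1)).2] at h
        rw [this, mul_one]
    have h2 : f * P n = (f - C c * P (k + 1)) * P n + c • (P (k + 1) * P n) := by
      rw [Polynomial.smul_eq_C_mul]; ring
    rw [h2, map_add, ih n _ h1 (lt_trans (Nat.lt_succ_self k) hn), map_smul,
      ho (k + 1) n (by omega), smul_zero, add_zero]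


lemma pMul_eq_zero_iff (u : PDual) (hreg : IsRegularFunc u) (χ : Polynomial ℂ)
    (h : ∀ f, u (χ * f) = 0) : χ = 0 := by
  obtain ⟨P, hP, ho, hnz⟩ := hreg
  by_contra hχ
  set n := χ.natDegree with hn
  have hP0 : P 0 = 1 := ((hP 0).1.natDegree_eq_zero).mp (hP 0).2
  rcases Nat.eq_zero_or_pos n with h0 | hpos
  · have hc : χ = C (χ.coeff 0) := Polynomial.eq_C_of_natDegree_le_zero h0.le
    have hc0 : χ.coeff 0 ≠ 0 := fun hh => hχ (by rw [hc, hh, map_zero])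
    have hth := h 1
    have hC : (C (χ.coeff 0) : Polynomial ℂ) = χ.coeff 0 • 1 := by
      rw [Polynomial.smul_eq_C_mul, mul_one]
    rw [mul_one, hc, hC, map_smul, smul_eq_mul] at hth
    have hu1 : u 1 ≠ 0 := by have := hnz 0; rwa [hP0, one_pow] at this
    rcases mul_eq_zero.mp hth with h1 | h1
    · exact hc0 h1
    · exact hu1 h1
  · set r := χ - C χ.leadingCoeff * P n with hr
    have hrd : r.natDegree ≤ n - 1 := by
      rw [Polynomial.natDegree_le_iff_coeff_eq_zero]
      intro m hm
      have hm' : n ≤ m := by omega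
      rw [hr, Polynomial.coeff_sub, Polynomial.coeff_C_mul]
      rcases eq_or_lt_of_le hm' with h1 | h1
      · have hc1 : (P n).coeff n = 1 := by
          have hh := (hP n).1.coeff_natDegree
          rwa [(hP n).2] at hh
        rw [← h1, hc1, mul_one, Polynomial.leadingCoeff, ← hn, sub_self]
      · rw [Polynomial.coeff_eq_zero_of_natDegree_lt (hn ▸ h1),
          Polynomial.coeff_eq_zero_of_natDegree_lt (by rw [(hP n).2]; omega),
          mul_zero, sub_self]
    have key : u (χ * P n) = 0 := h (P n)
    have hsplit : χ * P n = r * P n + χ.leadingCoeff • (P n ^ 2) := by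
      rw [Polynomial.smul_eq_C_mul, hr]; ring
    rw [hsplit, map_add, orth u P hP ho (n - 1) n r hrd (by omega), map_smul,
      smul_eq_mul, zero_add] at key
    rcases mul_eq_zero.mp key with h1 | h1
    · exact hχ (Polynomial.leadingCoeff_eq_zero.mp h1)
    · exact hnz n h1

lemma hahn_mult_ne (q ω : ℂ) (hq0 : q ≠ 0) (hqω : q ≠ 1 ∨ ω ≠ 0) :
    (C (q⁻¹ - 1) * X + C (-ω / q) : Polynomial ℂ) ≠ 0 := by
  intro hh
  rcases hqω with h | h
  · have ha : q⁻¹ - 1 ≠ 0 := sub_ne_zero.mpr fun he => h (inv_eq_one.mp he)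
    have hd := Polynomial.natDegree_linear (b := -ω / q) ha
    rw [hh] at hd
    simp at hd
  · have h0 := congrArg (fun p : Polynomial ℂ => p.coeff 0) hh
    simp [_root_.div_eq_zero_iff] at h0
    tauto

lemma dstar_one (q ω : ℂ) (hq0 : q ≠ 0) (hqω : q ≠ 1 ∨ ω ≠ 0)
    (Dstar : Polynomial ℂ →ₗ[ℂ] Polynomial ℂ) (hDstar : IsHahn q⁻¹ (-ω / q) Dstar) :
    Dstar 1 = 0 := by
  have key := hDstar 1
  rw [Polynomial.one_comp, sub_self] at key
  rcases mul_eq_zero.mp key with h | h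
  · exact absurd h (hahn_mult_ne q ω hq0 hqω)
  · exact h


lemma dstar_pow (q ω : ℂ) (hq0 : q ≠ 0) (hqω : q ≠ 1 ∨ ω ≠ 0)
    (hqr : ∀ n : ℕ, 0 < n → q ^ n = 1 → q = 1)
    (Dstar : Polynomial ℂ →ₗ[ℂ] Polynomial ℂ) (hDstar : IsHahn q⁻¹ (-ω / q) Dstar)
    (n : ℕ) : (Dstar (X ^ (n + 1))).natDegree = n ∧ Dstar (X ^ (n + 1)) ≠ 0 := by
  have key := hDstar (X ^ (n + 1))
  rw [Polynomial.X_pow_comp] at key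
  set m : Polynomial ℂ := C (q⁻¹ - 1) * X + C (-ω / q) with hm
  set R : Polynomial ℂ := (C q⁻¹ * X + C (-ω / q)) ^ (n + 1) - X ^ (n + 1) with hR
  have hmne : m ≠ 0 := hahn_mult_ne q ω hq0 hqω
  by_cases hq1 : q = 1
  · have hω : ω ≠ 0 := hqω.resolve_left (not_not_intro hq1)
    subst hq1
    have hRc : R = (X + C (-ω)) ^ (n + 1) - X ^ (n + 1) := by
      rw [hR]; norm_num
    have hcoeffn : R.coeff n = -ω * (n + 1) := by
      rw [hRc, Polynomial.coeff_sub, Polynomial.coeff_X_add_C_pow,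
        Polynomial.coeff_X_pow]
      simp [Nat.choose_succ_self_right]
    have hcn : R.coeff n ≠ 0 := by
      rw [hcoeffn]
      exact mul_ne_zero (neg_ne_zero.mpr hω) (by exact_mod_cast Nat.succ_ne_zero n)
    have hRle : R.natDegree ≤ n := by
      rw [Polynomial.natDegree_le_iff_coeff_eq_zero]
      intro N hN
      rw [hRc, Polynomial.coeff_sub, Polynomial.coeff_X_add_C_pow, Polynomial.coeff_X_pow]
      rcases eq_or_lt_of_le (Nat.succ_le_of_lt hN) with h1 | h1
      · rw [← h1]; simp
      · rw [Nat.choose_eq_zero_of_lt h1, if_neg (by omega)]; simp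
    have hRn : R.natDegree = n := le_antisymm hRle (Polynomial.le_natDegree_of_ne_zero hcn)
    have hRne : R ≠ 0 := fun h => hcn (by rw [h, Polynomial.coeff_zero])
    have hDne : Dstar (X ^ (n + 1)) ≠ 0 := fun h => hRne (by rw [← key, h, mul_zero])
    have hmC : m = C (-ω) := by rw [hm]; norm_num
    have := Polynomial.natDegree_mul hmne hDne
    rw [key, hRn, hmC, Polynomial.natDegree_C, zero_add] at this
    exact ⟨this.symm, hDne⟩
  · have hqi : q⁻¹ ≠ 0 := inv_ne_zero hq0
    have hp1 : (C q⁻¹ * X + C (-ω / q) : Polynomial ℂ).natDegree = 1 :=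
      Polynomial.natDegree_linear hqi
    have hpn : ((C q⁻¹ * X + C (-ω / q) : Polynomial ℂ) ^ (n + 1)).natDegree = n + 1 := by
      rw [Polynomial.natDegree_pow, hp1, mul_one]
    have hlcp : ((C q⁻¹ * X + C (-ω / q) : Polynomial ℂ) ^ (n + 1)).coeff (n + 1)
        = q⁻¹ ^ (n + 1) := by
      have h1 := Polynomial.coeff_natDegree (p := (C q⁻¹ * X + C (-ω / q) : Polynomial ℂ) ^ (n + 1))
      rw [hpn, Polynomial.leadingCoeff_pow, Polynomial.leadingCoeff_linear hqi] at h1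
      exact h1
    have hql : q⁻¹ ^ (n + 1) ≠ 1 := by
      intro h
      rw [inv_pow, inv_eq_one] at h
      exact hq1 (hqr (n + 1) (Nat.succ_pos n) h)
    have hcn : R.coeff (n + 1) ≠ 0 := by
      rw [hR, Polynomial.coeff_sub, hlcp, Polynomial.coeff_X_pow, if_pos rfl]
      exact sub_ne_zero.mpr hql
    have hRle : R.natDegree ≤ n + 1 := by
      rw [hR]
      refine (Polynomial.natDegree_sub_le _ _).trans ?_
      rw [hpn]
      simp [Polynomial.natDegree_X_pow]
    have hRn : R.natDegree = n + 1 := le_antisymm hRle (Polynomial.le_natDegree_of_ne_zero hcn)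
    have hRne : R ≠ 0 := fun h => hcn (by rw [h, Polynomial.coeff_zero])
    have hDne : Dstar (X ^ (n + 1)) ≠ 0 := fun h => hRne (by rw [← key, h, mul_zero])
    have hmd : m.natDegree = 1 := by
      rw [hm]
      exact Polynomial.natDegree_linear (sub_ne_zero.mpr fun he => hq1 (inv_eq_one.mp he))
    have hth := Polynomial.natDegree_mul hmne hDne
    rw [key, hRn, hmd] at hth
    exact ⟨by omega, hDne⟩

theorem stmt_10 (q ω : ℂ) (hq0 : q ≠ 0) (hqω : q ≠ 1 ∨ ω ≠ 0)
    (hqr : ∀ n : ℕ, 0 < n → q ^ n = 1 → q = 1)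
    (φ ψ : Polynomial ℂ) (hφ : φ.natDegree ≤ 2) (hψ : ψ.natDegree ≤ 1)
    (Dstar : Polynomial ℂ →ₗ[ℂ] Polynomial ℂ) (hDstar : IsHahn q⁻¹ (-ω / q) Dstar)
    (u : PDual) (hreg : IsRegularFunc u)
    (heq : hahnDual q Dstar (pMul φ u) = pMul ψ u)
    (hne : φ ≠ 0 ∨ ψ ≠ 0) :
    φ ≠ 0 ∧ ψ ≠ 0 ∧ ψ.degree = 1 := by
  have hfe : ∀ f, (-q⁻¹) * u (φ * Dstar f) = u (ψ * f) := by
    intro f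
    have h := LinearMap.congr_fun heq f
    simpa [hahnDual, pMul, LinearMap.mulLeft_apply, smul_eq_mul] using h
  have hqi : (-q⁻¹ : ℂ) ≠ 0 := neg_ne_zero.mpr (inv_ne_zero hq0)
  have hψne : ψ ≠ 0 := by
    intro hψ0
    have hφ0 : φ = 0 := by
      apply pMul_eq_zero_iff u hreg
      have hv : ∀ n : ℕ, u (φ * Dstar (X ^ (n + 1))) = 0 := by
        intro n
        have h := hfe (X ^ (n + 1))
        rw [hψ0, zero_mul, map_zero] at h
        exact (mul_eq_zero.mp h).resolve_left hqi
      intro f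
      have h := vanish_of_forall_deg (pMul φ u) (fun n => Dstar (X ^ (n + 1)))
        (fun n => (dstar_pow q ω hq0 hqω hqr Dstar hDstar n).1)
        (fun n => (dstar_pow q ω hq0 hqω hqr Dstar hDstar n).2)
        (fun n => by simpa [pMul] using hv n) f
      simpa [pMul] using h
    rcases hne with h | h
    · exact h hφ0
    · exact h hψ0
  have hφne : φ ≠ 0 := by
    intro hφ0
    apply hψne
    apply pMul_eq_zero_iff u hreg
    intro f
    have h := hfe f
    rw [hφ0, zero_mul, map_zero, mul_zero] at h
    exact h.symm
  obtain ⟨P, hP, ho, hnz⟩ := hreg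
  have hP0 : P 0 = 1 := ((hP 0).1.natDegree_eq_zero).mp (hP 0).2
  have hu1 : u 1 ≠ 0 := by have h := hnz 0; rwa [hP0, one_pow] at h
  have huψ : u ψ = 0 := by
    have h := hfe 1
    simp only [dstar_one q ω hq0 hqω Dstar hDstar, mul_zero, map_zero, mul_one] at h
    exact h.symm
  have hd1 : ψ.natDegree = 1 := by
    rcases Nat.lt_or_ge ψ.natDegree 1 with h | h
    · exfalso
      have h0 : ψ.natDegree = 0 := by omega
      have hc : ψ = C (ψ.coeff 0) := Polynomial.eq_C_of_natDegree_le_zero h0.le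
      have hc0 : ψ.coeff 0 ≠ 0 := fun hh => hψne (by rw [hc, hh, map_zero])
      have hC : (C (ψ.coeff 0) : Polynomial ℂ) = ψ.coeff 0 • 1 := by
        rw [Polynomial.smul_eq_C_mul, mul_one]
      rw [hc, hC, map_smul, smul_eq_mul] at huψ
      rcases mul_eq_zero.mp huψ with h1 | h1
      · exact hc0 h1
      · exact hu1 h1
    · omega
  refine ⟨hφne, hψne, ?_⟩
  rw [Polynomial.degree_eq_natDegree hψne, hd1]
  rfl


end HahnOPSPaper
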